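/- Let q be a real number with q > 1. For integers 0 ≤ b < a define C(a,b) = −[a choose b]_q · ∏_{k=b+1}^{a} (q^k + 1). Then for all integers 0 ≤ i ≤ m, the sum, over all integers j ≥ 1 and all strictly increasing integer sequences i = ℓ_1 < ℓ_2 < … < ℓ_j = m, of ∏_{k=1}^{j−1} C(ℓ_{k+1}, ℓ_k) equals (−1)^{m−i} · q^{(m−i)(m−i−1)/2} · [m choose i]_q · ∏_{k=i+1}^{m} (q^k + 1). (When i = m the only such sequence is the one-term sequence, whose associated empty product is 1.) -/

import Mathlib

/-- The Gaussian binomial coefficient `[n choose k]_q` for a real base `q`. -/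
noncomputable def gbinom (q : ℝ) (n k : ℕ) : ℝ :=
  ∏ j ∈ Finset.Icc 1 k, (q ^ (n - k + j) - 1) / (q ^ j - 1)

noncomputable def qfact (q : ℝ) (n : ℕ) : ℝ := ∏ j ∈ Finset.Icc 1 n, (q ^ j - 1)

lemma pow_sub_one_ne {q : ℝ} (hq : 1 < q) {j : ℕ} (hj : 1 ≤ j) : q ^ j - 1 ≠ 0 :=
  sub_ne_zero.2 (ne_of_gt (one_lt_pow₀ hq (by omega)))

lemma qfact_ne_zero {q : ℝ} (hq : 1 < q) (n : ℕ) : qfact q n ≠ 0 :=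
  Finset.prod_ne_zero_iff.2 fun j hj => pow_sub_one_ne hq (Finset.mem_Icc.1 hj).1

lemma qfact_succ (q : ℝ) (n : ℕ) : qfact q (n + 1) = qfact q n * (q ^ (n + 1) - 1) := by
  unfold qfact
  rw [← Finset.prod_Icc_succ_top (by omega)]

lemma gbinom_eq {q : ℝ} (hq : 1 < q) {n k : ℕ} (h : k ≤ n) :
    gbinom q n k = qfact q n / (qfact q k * qfact q (n - k)) := by
  have key : qfact q (n - k) * ∏ j ∈ Finset.Icc 1 k, (q ^ (n - k + j) - 1) = qfact q n := by
    have : ∏ j ∈ Finset.Icc 1 k, (q ^ (n - k + j) - 1) = ∏ j ∈ Finset.Ioc (n - k) n, (q ^ j - 1) := by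
      refine Finset.prod_nbij' (fun j => n - k + j) (fun j => j - (n - k)) ?_ ?_ ?_ ?_ ?_
      · intro a ha; simp only [Finset.mem_Icc, Finset.mem_Ioc] at *; omega
      · intro a ha; simp only [Finset.mem_Icc, Finset.mem_Ioc] at *; omega
      · intro a ha; simp only [Finset.mem_Icc, Finset.mem_Ioc] at *; omega
      · intro a ha; simp only [Finset.mem_Icc, Finset.mem_Ioc] at *; omega
      · intro a ha; rfl
    rw [this]
    unfold qfact
    rw [show ∀ b, Finset.Icc 1 b = Finset.Ioc 0 b from fun b => Finset.Icc_add_one_left_eq_Ioc 0 b,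
      show ∀ b, Finset.Icc 1 b = Finset.Ioc 0 b from fun b => Finset.Icc_add_one_left_eq_Ioc 0 b, Finset.prod_Ioc_consecutive (fun j => q ^ j - 1) (Nat.zero_le _) (by omega : n - k ≤ n)]
  have key2 : ∏ j ∈ Finset.Icc 1 k, (q ^ (n - k + j) - 1) = qfact q n / qfact q (n - k) := by
    rw [eq_div_iff (qfact_ne_zero hq _), mul_comm]; exact key
  unfold gbinom
  rw [Finset.prod_div_distrib, key2,
    show (∏ j ∈ Finset.Icc 1 k, (q ^ j - 1)) = qfact q k from rfl,
    div_div, mul_comm (qfact q (n - k)) (qfact q k)]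

lemma gbinom_zero (q : ℝ) (n : ℕ) : gbinom q n 0 = 1 := by simp [gbinom]

lemma gbinom_self {q : ℝ} (hq : 1 < q) (n : ℕ) : gbinom q n n = 1 := by
  unfold gbinom
  rw [Finset.prod_congr rfl fun j hj => ?_, Finset.prod_const_one]
  rw [Nat.sub_self, Nat.zero_add, div_self (pow_sub_one_ne hq (Finset.mem_Icc.1 hj).1)]

lemma gbinom_symm {q : ℝ} (hq : 1 < q) {n k : ℕ} (h : k ≤ n) :
    gbinom q n (n - k) = gbinom q n k := by
  rw [gbinom_eq hq (by omega), gbinom_eq hq h, Nat.sub_sub_self h, mul_comm]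

lemma gbinom_trinomial {q : ℝ} (hq : 1 < q) {i t m : ℕ} (h1 : i ≤ t) (h2 : t ≤ m) :
    gbinom q m t * gbinom q t i = gbinom q m i * gbinom q (m - i) (t - i) := by
  rw [gbinom_eq hq h2, gbinom_eq hq h1, gbinom_eq hq (h1.trans h2),
    gbinom_eq hq (by omega : t - i ≤ m - i), show m - i - (t - i) = m - t by omega]
  field_simp [qfact_ne_zero hq]

lemma gbinom_pascal {q : ℝ} (hq : 1 < q) {n s : ℕ} (h : s + 1 ≤ n) :
    gbinom q (n + 1) (s + 1) = q ^ (s + 1) * gbinom q n (s + 1) + gbinom q n s := by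
  obtain ⟨e, he⟩ : ∃ e, n - s = e + 1 := ⟨n - s - 1, by omega⟩
  rw [gbinom_eq hq (by omega), gbinom_eq hq h, gbinom_eq hq (by omega : s ≤ n),
    show n + 1 - (s + 1) = e + 1 by omega, show n - (s + 1) = e by omega, he,
    qfact_succ q n, qfact_succ q s, qfact_succ q e,
    show n + 1 = (s + 1) + (e + 1) by omega]
  have h1 := qfact_ne_zero hq n
  have h2 := qfact_ne_zero hq s
  have h3 := qfact_ne_zero hq e
  have h4 := pow_sub_one_ne hq (le_refl 1)
  have h5 : q ^ (s + 1) - 1 ≠ 0 := pow_sub_one_ne hq (by omega)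
  have h6 : q ^ (e + 1) - 1 ≠ 0 := pow_sub_one_ne hq (by omega)
  have h7 : q ^ (s + 1 + (e + 1)) - 1 ≠ 0 := pow_sub_one_ne hq (by omega)
  field_simp
  ring

lemma choose_two_succ (s : ℕ) : (s + 1).choose 2 = s.choose 2 + s := by
  rw [Nat.choose_succ_succ, Nat.choose_one_right]; exact Nat.add_comm _ _

lemma hB (q : ℝ) (s : ℕ) :
    (-1 : ℝ) ^ (s + 1) * q ^ ((s + 1).choose 2) = -((-1 : ℝ) ^ s * q ^ (s.choose 2) * q ^ s) := by
  rw [choose_two_succ, pow_add, pow_succ]; ring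

/-- The coefficient `C(a, b) = −[a choose b]_q · ∏_{k=b+1}^{a} (q^k + 1)`. -/
noncomputable def coeffC (q : ℝ) (a b : ℕ) : ℝ :=
  -(gbinom q a b * ∏ k ∈ Finset.Icc (b + 1) a, (q ^ k + 1))

lemma key_sum {q : ℝ} (hq : 1 < q) (N : ℕ) :
    ∑ s ∈ Finset.range (N + 2), (-1 : ℝ) ^ s * q ^ (s.choose 2) * gbinom q (N + 1) s = 0 := by
  rw [Finset.sum_range_succ', Finset.sum_range_succ]
  have step : ∀ s ∈ Finset.range N,
      (-1 : ℝ) ^ (s + 1) * q ^ ((s + 1).choose 2) * gbinom q (N + 1) (s + 1)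
      = (fun t => (-1 : ℝ) ^ (t + 1) * q ^ ((t + 1).choose 2) * gbinom q N t) s
        - (fun t => (-1 : ℝ) ^ (t + 1) * q ^ ((t + 1).choose 2) * gbinom q N t) (s + 1) := by
    intro s hs
    simp only
    rw [gbinom_pascal hq (by simpa using hs), hB q (s + 1)]
    ring
  rw [Finset.sum_congr rfl step, Finset.sum_range_sub']
  simp only [gbinom_self hq, gbinom_zero, hB q N, hB q 0]
  norm_num

lemma key_sum' {q : ℝ} (hq : 1 < q) (N : ℕ) :
    ∑ s ∈ Finset.range (N + 2),
      (-1 : ℝ) ^ (N + 1 - s) * q ^ ((N + 1 - s).choose 2) * gbinom q (N + 1) s = 0 := by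
  rw [← Finset.sum_range_reflect]
  rw [Finset.sum_congr rfl (fun j hj => ?_)]
  · exact key_sum hq N
  · have hj' : j ≤ N + 1 := by have := Finset.mem_range.1 hj; omega
    rw [show N + 2 - 1 - j = N + 1 - j by omega,
      show N + 1 - (N + 1 - j) = j by omega, gbinom_symm hq hj']

lemma alg_step {q : ℝ} (hq : 1 < q) {i m : ℕ} (him : i < m) :
    ∑ t ∈ Finset.Icc (i + 1) m, coeffC q t i *
      ((-1 : ℝ) ^ (m - t) * q ^ ((m - t) * (m - t - 1) / 2) * gbinom q m t *
        ∏ k ∈ Finset.Icc (t + 1) m, (q ^ k + 1))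
    = (-1 : ℝ) ^ (m - i) * q ^ ((m - i) * (m - i - 1) / 2) * gbinom q m i *
        ∏ k ∈ Finset.Icc (i + 1) m, (q ^ k + 1) := by
  obtain ⟨N, hN⟩ : ∃ N, m - i = N + 1 := ⟨m - i - 1, by omega⟩
  have hterm : ∀ t ∈ Finset.Icc (i + 1) m, coeffC q t i *
      ((-1 : ℝ) ^ (m - t) * q ^ ((m - t) * (m - t - 1) / 2) * gbinom q m t *
        ∏ k ∈ Finset.Icc (t + 1) m, (q ^ k + 1))
      = -((-1 : ℝ) ^ (m - t) * q ^ ((m - t).choose 2) * gbinom q (m - i) (t - i)) *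
          (gbinom q m i * ∏ k ∈ Finset.Icc (i + 1) m, (q ^ k + 1)) := by
    intro t ht
    rw [Finset.mem_Icc] at ht
    have hsplit : (∏ k ∈ Finset.Icc (i + 1) t, (q ^ k + 1)) *
        ∏ k ∈ Finset.Icc (t + 1) m, (q ^ k + 1) = ∏ k ∈ Finset.Icc (i + 1) m, (q ^ k + 1) := by
      rw [Finset.Icc_add_one_left_eq_Ioc, Finset.Icc_add_one_left_eq_Ioc, Finset.Icc_add_one_left_eq_Ioc]
      exact Finset.prod_Ioc_consecutive _ (by omega) ht.2
    have htri := gbinom_trinomial hq (by omega : i ≤ t) ht.2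
    rw [coeffC, ← hsplit]
    simp only [Nat.choose_two_right]
    linear_combination (-((-1 : ℝ) ^ (m - t) * q ^ ((m - t) * (m - t - 1) / 2)) *
      (∏ k ∈ Finset.Icc (i + 1) t, (q ^ k + 1)) *
      (∏ k ∈ Finset.Icc (t + 1) m, (q ^ k + 1))) * htri
  rw [Finset.sum_congr rfl hterm, ← Finset.sum_mul]
  have hsum : ∑ t ∈ Finset.Icc (i + 1) m,
      -((-1 : ℝ) ^ (m - t) * q ^ ((m - t).choose 2) * gbinom q (m - i) (t - i))
      = (-1 : ℝ) ^ (m - i) * q ^ ((m - i).choose 2) := by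
    rw [← Finset.Ico_add_one_right_eq_Icc, Finset.sum_Ico_eq_sum_range,
      show m + 1 - (i + 1) = N + 1 by omega]
    have hre : ∀ s ∈ Finset.range (N + 1),
        -((-1 : ℝ) ^ (m - (i + 1 + s)) * q ^ ((m - (i + 1 + s)).choose 2) *
          gbinom q (m - i) (i + 1 + s - i))
        = -((-1 : ℝ) ^ (N - s) * q ^ ((N - s).choose 2) * gbinom q (N + 1) (s + 1)) := by
      intro s hs
      rw [show m - (i + 1 + s) = N - s by omega, show i + 1 + s - i = s + 1 by omega, hN]
    rw [Finset.sum_congr rfl hre]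
    have h := key_sum' hq N
    rw [Finset.sum_range_succ'] at h
    simp only [Nat.succ_sub_succ, Nat.sub_zero, gbinom_zero, mul_one] at h
    rw [hN, Finset.sum_neg_distrib]
    linarith
  rw [hsum, Nat.choose_two_right]
  ring

/-- For a strictly increasing list `ℓ_1 < ℓ_2 < ⋯ < ℓ_j`, the product
`∏_{k=1}^{j-1} C(ℓ_{k+1}, ℓ_k)`; for lists of length at most one this is the empty product 1. -/
noncomputable def chainProd (q : ℝ) : List ℕ → ℝ
  | [] => 1
  | [_] => 1
  | a :: b :: t => coeffC q b a * chainProd q (b :: t)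

lemma chain_insert (q : ℝ) {i : ℕ} {T : Finset ℕ} (hne : T.Nonempty)
    (hi : ∀ x ∈ T, i < x) :
    chainProd q ((insert i T).sort (· ≤ ·)) =
      coeffC q (T.min' hne) i * chainProd q (T.sort (· ≤ ·)) := by
  obtain ⟨a, L, hL⟩ : ∃ a L, T.sort (· ≤ ·) = a :: L := by
    cases h : T.sort (· ≤ ·) with
    | nil =>
      exfalso
      have := Finset.length_sort (α := ℕ) (· ≤ ·) (s := T)
      rw [h] at this
      simp only [List.length_nil] at this
      exact absurd (Finset.card_eq_zero.1 this.symm) (Finset.nonempty_iff_ne_empty.1 hne)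
    | cons a L => exact ⟨a, L, rfl⟩
  have ha : a = T.min' hne := by
    have h0 : (T.sort (· ≤ ·))[0]'(by rw [hL]; simp) = a := by simp [hL]
    rw [← h0, Finset.sorted_zero_eq_min']
  have hins : (insert i T).sort (· ≤ ·) = i :: T.sort (· ≤ ·) := by
    refine Finset.sort_insert (· ≤ ·) (fun b hb => le_of_lt (hi b hb)) ?_
    intro hiT
    exact lt_irrefl i (hi i hiT)
  rw [hins, hL, ha]
  rfl

lemma step_lemma (q : ℝ) {i m : ℕ} (him : i < m) :
    ∑ S ∈ (Finset.Ioo i m).powerset, chainProd q ((insert i (insert m S)).sort (· ≤ ·))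
    = ∑ t ∈ Finset.Icc (i + 1) m, coeffC q t i *
        ∑ S ∈ (Finset.Ioo t m).powerset, chainProd q ((insert t (insert m S)).sort (· ≤ ·)) := by
  have hrhs : ∀ t ∈ Finset.Icc (i + 1) m, coeffC q t i *
      ∑ S ∈ (Finset.Ioo t m).powerset, chainProd q ((insert t (insert m S)).sort (· ≤ ·))
      = ∑ S ∈ (Finset.Ioo t m).powerset,
          coeffC q t i * chainProd q ((insert t (insert m S)).sort (· ≤ ·)) := fun t _ =>
    Finset.mul_sum _ _ _
  rw [Finset.sum_congr rfl hrhs, Finset.sum_sigma']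
  -- now a bijection
  have hmm : ∀ S : Finset ℕ, m ∈ insert m S := fun S => Finset.mem_insert_self m S
  refine Finset.sum_nbij'
    (fun S => ⟨(insert m S).min' (Finset.insert_nonempty m S), S.erase ((insert m S).min' (Finset.insert_nonempty m S))⟩)
    (fun x => (insert x.1 x.2).erase m) ?_ ?_ ?_ ?_ ?_
  · -- hi : maps into sigma
    intro S hS
    rw [Finset.mem_powerset] at hS
    set t := (insert m S).min' ⟨m, hmm S⟩ with hts
    have htmem : t = m ∨ t ∈ S := by
      have := Finset.min'_mem (insert m S) ⟨m, hmm S⟩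
      rwa [Finset.mem_insert] at this
    have htle : ∀ x ∈ S, t ≤ x := fun x hx =>
      Finset.min'_le _ _ (Finset.mem_insert_of_mem hx)
    have htm : t ≤ m := Finset.min'_le _ _ (hmm S)
    have hti : i < t := by
      rcases htmem with h | h
      · omega
      · exact (Finset.mem_Ioo.1 (hS h)).1
    rw [Finset.mem_sigma, Finset.mem_Icc, Finset.mem_powerset]
    dsimp only
    refine ⟨⟨by omega, htm⟩, fun x hx => ?_⟩
    rw [Finset.mem_erase] at hx
    rw [Finset.mem_Ioo]
    have := (Finset.mem_Ioo.1 (hS hx.2)).2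
    have := htle x hx.2
    constructor <;> omega
  · -- hj
    intro x hx
    rw [Finset.mem_sigma, Finset.mem_Icc, Finset.mem_powerset] at hx
    rw [Finset.mem_powerset]
    intro y hy
    rw [Finset.mem_erase, Finset.mem_insert] at hy
    rw [Finset.mem_Ioo]
    rcases hy.2 with h | h
    · have := hx.1; omega
    · have := Finset.mem_Ioo.1 (hx.2 h)
      have := hx.1
      omega
  · -- left_inv
    intro S hS
    rw [Finset.mem_powerset] at hS
    set t := (insert m S).min' ⟨m, hmm S⟩ with hts
    have htmem : t = m ∨ t ∈ S := by
      have := Finset.min'_mem (insert m S) ⟨m, hmm S⟩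
      rwa [Finset.mem_insert] at this
    have hmS : m ∉ S := fun h => by
      have := (Finset.mem_Ioo.1 (hS h)).2; omega
    rcases htmem with h | h
    · -- t = m, then S = ∅
      have hSe : S = ∅ := by
        by_contra hne
        obtain ⟨x, hx⟩ := Finset.nonempty_iff_ne_empty.2 hne
        have h1 : t ≤ x := Finset.min'_le _ _ (Finset.mem_insert_of_mem hx)
        have := (Finset.mem_Ioo.1 (hS hx)).2
        omega
      simp [hSe, h]
    · have htm : t ≠ m := fun he => hmS (he ▸ h)
      rw [Finset.insert_erase h, Finset.erase_eq_of_notMem hmS]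
  · -- right_inv
    intro x hx
    rw [Finset.mem_sigma, Finset.mem_Icc, Finset.mem_powerset] at hx
    obtain ⟨⟨ht1, ht2⟩, hsub⟩ := hx
    obtain ⟨t, S'⟩ := x
    dsimp at ht1 ht2 hsub ⊢
    have htS' : t ∉ S' := fun h => by
      have := (Finset.mem_Ioo.1 (hsub h)).1; omega
    by_cases htm : t = m
    · have hS'e : S' = ∅ := by
        rw [← Finset.subset_empty]
        rw [htm] at hsub
        simpa [Finset.Ioo_self] using hsub
      subst htm
      simp [hS'e]
    · have hmS' : m ∉ S' := fun h => by
        have := (Finset.mem_Ioo.1 (hsub h)).2; omega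
      have hm' : m ∉ insert t S' := by
        simp only [Finset.mem_insert]
        push_neg
        exact ⟨fun h => htm h.symm, hmS'⟩
      have he : (insert t S').erase m = insert t S' := Finset.erase_eq_of_notMem hm'
      have hmin : (insert m (insert t S')).min' ⟨m, hmm _⟩ = t := by
        apply le_antisymm
        · exact Finset.min'_le _ _ (Finset.mem_insert_of_mem (Finset.mem_insert_self t S'))
        · apply Finset.le_min'
          intro y hy
          rw [Finset.mem_insert, Finset.mem_insert] at hy
          rcases hy with h | h | h
          · omega
          · omega
          · exact le_of_lt (Finset.mem_Ioo.1 (hsub h)).1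
      rw [he, hmin, Finset.erase_insert htS']
  · -- values
    intro S hS
    rw [Finset.mem_powerset] at hS
    set t := (insert m S).min' ⟨m, hmm S⟩ with hts
    have htmem : t = m ∨ t ∈ S := by
      have := Finset.min'_mem (insert m S) ⟨m, hmm S⟩
      rwa [Finset.mem_insert] at this
    have hT : insert t (insert m (S.erase t)) = insert m S := by
      rcases htmem with h | h
      · have hSe : S = ∅ := by
          by_contra hne
          obtain ⟨x, hx⟩ := Finset.nonempty_iff_ne_empty.2 hne
          have h1 : t ≤ x := Finset.min'_le _ _ (Finset.mem_insert_of_mem hx)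
          have := (Finset.mem_Ioo.1 (hS hx)).2
          omega
        simp [hSe, h]
      · rw [Finset.insert_comm, Finset.insert_erase h]
    have hi : ∀ x ∈ insert m S, i < x := by
      intro x hx
      rw [Finset.mem_insert] at hx
      rcases hx with h | h
      · omega
      · exact (Finset.mem_Ioo.1 (hS h)).1
    rw [hT]
    exact chain_insert q ⟨m, hmm S⟩ hi

/-- The chains `i = ℓ_1 < ℓ_2 < ⋯ < ℓ_j = m` correspond exactly to the subsets `S` of the
open interval `(i, m)` (the intermediate values), the associated sorted list being
`i` followed by the elements of `S` in increasing order, followed by `m`. -/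
theorem stmt9 (q : ℝ) (hq : 1 < q) (i m : ℕ) (him : i ≤ m) :
    ∑ S ∈ (Finset.Ioo i m).powerset,
      chainProd q ((insert i (insert m S)).sort (· ≤ ·)) =
    (-1 : ℝ) ^ (m - i) * q ^ ((m - i) * (m - i - 1) / 2) * gbinom q m i *
      ∏ k ∈ Finset.Icc (i + 1) m, (q ^ k + 1) := by
  suffices h : ∀ d i', i' ≤ m → m - i' = d →
      ∑ S ∈ (Finset.Ioo i' m).powerset,
        chainProd q ((insert i' (insert m S)).sort (· ≤ ·)) =
      (-1 : ℝ) ^ (m - i') * q ^ ((m - i') * (m - i' - 1) / 2) * gbinom q m i' *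
        ∏ k ∈ Finset.Icc (i' + 1) m, (q ^ k + 1) from h (m - i) i him rfl
  intro d
  induction d using Nat.strong_induction_on with
  | _ d IH =>
    intro i hi hd
    by_cases he : i = m
    · subst he
      rw [Finset.Ioo_self, Finset.powerset_empty, Finset.sum_singleton,
        show insert i (insert i (∅ : Finset ℕ)) = {i} by simp,
        Finset.sort_singleton, Nat.sub_self,
        Finset.Icc_eq_empty (by omega), Finset.prod_empty]
      simp [chainProd, gbinom_self hq]
    · have him' : i < m := lt_of_le_of_ne hi he
      rw [step_lemma q him']
      have hIH : ∀ t ∈ Finset.Icc (i + 1) m,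
          coeffC q t i * ∑ S ∈ (Finset.Ioo t m).powerset,
            chainProd q ((insert t (insert m S)).sort (· ≤ ·))
          = coeffC q t i * ((-1 : ℝ) ^ (m - t) * q ^ ((m - t) * (m - t - 1) / 2) *
              gbinom q m t * ∏ k ∈ Finset.Icc (t + 1) m, (q ^ k + 1)) := by
        intro t ht
        rw [Finset.mem_Icc] at ht
        rw [IH (m - t) (by omega) t ht.2 rfl]
      rw [Finset.sum_congr rfl hIH]
      exact alg_step hq him'
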